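/- Let O = T² × (−h,0) with h > 0, where T² is the two-dimensional torus. Let β ∈ ℝ and let f : closure(O) → ℝ be of class C³ with ∂₃f(x_H, −h) = 0 and ∂₃f(x_H, 0) + β f(x_H, 0) = 0 for all x_H ∈ T² (periodic in the horizontal variables). Then ∑_{i,j=1}^3 ∫_O |∂²_{ij} f|² dx = ∫_O |Δf|² dx − 2β ∫_{T²} |∇_H f(x_H, 0)|² dx_H, where ∇_H = (∂₁, ∂₂). -/

import Mathlib

noncomputable section

open MeasureTheory
open scoped BigOperators

/-- The standard basis vectors of `ℝ³ = ℝ × ℝ × ℝ`. -/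
def ee : Fin 3 → ℝ × ℝ × ℝ := ![(1, 0, 0), (0, 1, 0), (0, 0, 1)]

/-- Partial derivative `∂ᵢ g` in the `i`-th coordinate direction. -/
def pd (i : Fin 3) (g : ℝ × ℝ × ℝ → ℝ) (x : ℝ × ℝ × ℝ) : ℝ :=
  fderiv ℝ g x (ee i)

/-- Second partial derivative `∂ᵢ∂ⱼ g`. -/
def pd2 (i j : Fin 3) (g : ℝ × ℝ × ℝ → ℝ) (x : ℝ × ℝ × ℝ) : ℝ :=
  pd i (pd j g) x

/-- A fundamental domain for the cylinder `O = 𝕋² × (−h, 0)`. -/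
def cyl (h : ℝ) : Set (ℝ × ℝ × ℝ) :=
  Set.Ioo (0:ℝ) 1 ×ˢ (Set.Ioo (0:ℝ) 1 ×ˢ Set.Ioo (-h) 0)

/-- A fundamental domain for the torus `𝕋²`. -/
def sqT : Set (ℝ × ℝ) := Set.Ioo (0:ℝ) 1 ×ˢ Set.Ioo (0:ℝ) 1

/-- Periodicity in the horizontal variables (so that `f` lives on `𝕋² × ℝ`). -/
def Per3 {α : Type*} (f : ℝ × ℝ × ℝ → α) : Prop :=
  (∀ x : ℝ × ℝ × ℝ, f (x.1 + 1, x.2.1, x.2.2) = f x) ∧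
  (∀ x : ℝ × ℝ × ℝ, f (x.1, x.2.1 + 1, x.2.2) = f x)

/-! ### Auxiliary lemmas -/

lemma pd_contDiff {n : WithTop ℕ∞} {g : ℝ × ℝ × ℝ → ℝ} (hg : ContDiff ℝ (n+1) g) (i : Fin 3) :
    ContDiff ℝ n (pd i g) :=
  (hg.fderiv_right le_rfl).clm_apply contDiff_const

lemma continuous_pd {g : ℝ × ℝ × ℝ → ℝ} (hg : ContDiff ℝ 1 g) (i : Fin 3) :
    Continuous (pd i g) := by
  have : ContDiff ℝ ((0:WithTop ℕ∞)+1) g := by norm_num; exact hg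
  exact (pd_contDiff this i).continuous

lemma slice0 {g : ℝ × ℝ × ℝ → ℝ} (hg : Differentiable ℝ g) (a b c : ℝ) :
    HasDerivAt (fun t => g (t, b, c)) (pd 0 g (a, b, c)) a := by
  have hcurve : HasDerivAt (fun t : ℝ => ((t, b, c) : ℝ×ℝ×ℝ)) (ee 0) a := by
    have := (hasDerivAt_id a).prodMk ((hasDerivAt_const a b).prodMk (hasDerivAt_const a c))
    simpa [ee] using this
  simpa [pd, Function.comp_def] using (hg (a,b,c)).hasFDerivAt.comp_hasDerivAt a hcurve

lemma slice1 {g : ℝ × ℝ × ℝ → ℝ} (hg : Differentiable ℝ g) (a b c : ℝ) :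
    HasDerivAt (fun t => g (a, t, c)) (pd 1 g (a, b, c)) b := by
  have hcurve : HasDerivAt (fun t : ℝ => ((a, t, c) : ℝ×ℝ×ℝ)) (ee 1) b := by
    have := (hasDerivAt_const b a).prodMk ((hasDerivAt_id b).prodMk (hasDerivAt_const b c))
    simpa [ee] using this
  simpa [pd, Function.comp_def] using (hg (a,b,c)).hasFDerivAt.comp_hasDerivAt b hcurve

lemma slice2 {g : ℝ × ℝ × ℝ → ℝ} (hg : Differentiable ℝ g) (a b c : ℝ) :
    HasDerivAt (fun t => g (a, b, t)) (pd 2 g (a, b, c)) c := by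
  have hcurve : HasDerivAt (fun t : ℝ => ((a, b, t) : ℝ×ℝ×ℝ)) (ee 2) c := by
    have := (hasDerivAt_const c a).prodMk ((hasDerivAt_const c b).prodMk (hasDerivAt_id c))
    simpa [ee] using this
  simpa [pd, Function.comp_def] using (hg (a,b,c)).hasFDerivAt.comp_hasDerivAt c hcurve

lemma pd_comm {g : ℝ × ℝ × ℝ → ℝ} (hg : ContDiff ℝ 2 g) (i j : Fin 3) (x : ℝ × ℝ × ℝ) :
    pd i (pd j g) x = pd j (pd i g) x := by
  have hd : Differentiable ℝ g := hg.differentiable (by norm_num)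
  have hd' : Differentiable ℝ (fderiv ℝ g) :=
    (hg.fderiv_right (le_refl ((1:WithTop ℕ∞)+1))).differentiable one_ne_zero
  have ev : ∀ k l : Fin 3, pd k (pd l g) x = fderiv ℝ (fderiv ℝ g) x (ee k) (ee l) := by
    intro k l
    have h1 : HasFDerivAt (fun y => fderiv ℝ g y (ee l))
        ((ContinuousLinearMap.apply ℝ ℝ (ee l)).comp (fderiv ℝ (fderiv ℝ g) x)) x :=
      (ContinuousLinearMap.apply ℝ ℝ (ee l)).hasFDerivAt.comp x (hd' x).hasFDerivAt
    show fderiv ℝ (fun y => fderiv ℝ g y (ee l)) x (ee k) = _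
    rw [h1.fderiv]
    rfl
  rw [ev i j, ev j i]
  exact second_derivative_symmetric (fun y => (hd y).hasFDerivAt) (hd' x).hasFDerivAt _ _

lemma per_pd {g : ℝ×ℝ×ℝ → ℝ} (hg : Differentiable ℝ g) (hp : Per3 g) (i : Fin 3) :
    Per3 (pd i g) := by
  have key : ∀ v : ℝ×ℝ×ℝ, (∀ x, g (x + v) = g x) → ∀ x : ℝ×ℝ×ℝ,
      fderiv ℝ g (x + v) = fderiv ℝ g x := by
    intro v hv x
    have h1 : HasFDerivAt (fun y => g (y + v)) (fderiv ℝ g (x + v)) x := by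
      have := (hg (x+v)).hasFDerivAt.comp x ((hasFDerivAt_id x).add_const v)
      simpa [Function.comp_def] using this
    rw [funext hv] at h1
    exact h1.fderiv.symm
  have k1 := key (1,0,0) (fun y => by
    have hv : y + ((1:ℝ),(0:ℝ),(0:ℝ)) = (y.1 + 1, y.2.1, y.2.2) := by ext <;> simp
    rw [hv]; exact hp.1 y)
  have k2 := key (0,1,0) (fun y => by
    have hv : y + ((0:ℝ),(1:ℝ),(0:ℝ)) = (y.1, y.2.1 + 1, y.2.2) := by ext <;> simp
    rw [hv]; exact hp.2 y)
  constructor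
  · intro x
    have hx : (x.1 + 1, x.2.1, x.2.2) = x + ((1:ℝ),(0:ℝ),(0:ℝ)) := by
      ext <;> simp
    simp only [pd, hx, k1 x]
  · intro x
    have hx : (x.1, x.2.1 + 1, x.2.2) = x + ((0:ℝ),(1:ℝ),(0:ℝ)) := by
      ext <;> simp
    simp only [pd, hx, k2 x]

lemma integrableOn_cyl {h : ℝ} {F : ℝ×ℝ×ℝ → ℝ} (hF : Continuous F) :
    IntegrableOn F (cyl h) := by
  have hc : IsCompact ((Set.Icc (0:ℝ) 1) ×ˢ (Set.Icc (0:ℝ) 1 ×ˢ Set.Icc (-h) 0)) :=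
    isCompact_Icc.prod (isCompact_Icc.prod isCompact_Icc)
  refine (hF.continuousOn.integrableOn_compact hc).mono_set ?_
  exact Set.prod_mono Set.Ioo_subset_Icc_self
    (Set.prod_mono Set.Ioo_subset_Icc_self Set.Ioo_subset_Icc_self)

lemma integrableOn_rect {F : ℝ×ℝ → ℝ} (hF : Continuous F) (p q r s : ℝ) :
    IntegrableOn F (Set.Ioo p q ×ˢ Set.Ioo r s) := by
  have hc : IsCompact ((Set.Icc p q) ×ˢ (Set.Icc r s)) := isCompact_Icc.prod isCompact_Icc
  exact (hF.continuousOn.integrableOn_compact hc).mono_set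
    (Set.prod_mono Set.Ioo_subset_Icc_self Set.Ioo_subset_Icc_self)

lemma integral_Ioo_deriv {u u' : ℝ → ℝ} (hu : ∀ t, HasDerivAt u (u' t) t) (hc : Continuous u')
    {a b : ℝ} (hab : a ≤ b) : ∫ t in Set.Ioo a b, u' t = u b - u a := by
  rw [← MeasureTheory.integral_Ioc_eq_integral_Ioo, ← intervalIntegral.integral_of_le hab]
  exact intervalIntegral.integral_eq_sub_of_hasDerivAt (fun t _ => hu t)
    (hc.intervalIntegrable a b)

lemma fub_cyl {h : ℝ} {F : ℝ×ℝ×ℝ → ℝ} (hF : Continuous F) :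
    ∫ x in cyl h, F x
      = ∫ a in Set.Ioo (0:ℝ) 1, ∫ b in Set.Ioo (0:ℝ) 1, ∫ z in Set.Ioo (-h) 0, F (a,b,z) := by
  have h1 : ∫ x in cyl h, F x
      = ∫ a in Set.Ioo (0:ℝ) 1, ∫ q in Set.Ioo (0:ℝ) 1 ×ˢ Set.Ioo (-h) 0, F (a, q) := by
    rw [show cyl h = Set.Ioo (0:ℝ) 1 ×ˢ (Set.Ioo (0:ℝ) 1 ×ˢ Set.Ioo (-h) 0) from rfl,
      Measure.volume_eq_prod]
    exact setIntegral_prod F (by rw [← Measure.volume_eq_prod]; exact integrableOn_cyl hF)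
  rw [h1]
  refine setIntegral_congr_fun measurableSet_Ioo (fun a _ => ?_)
  rw [Measure.volume_eq_prod]
  exact setIntegral_prod (fun q => F (a, q))
    (by rw [← Measure.volume_eq_prod]
        exact integrableOn_rect (hF.comp (by fun_prop)) 0 1 (-h) 0)

lemma fub_x {h : ℝ} {F : ℝ×ℝ×ℝ → ℝ} (hF : Continuous F) :
    ∫ x in cyl h, F x
      = ∫ q in Set.Ioo (0:ℝ) 1 ×ˢ Set.Ioo (-h) 0, ∫ a in Set.Ioo (0:ℝ) 1, F (a, q) := by
  have h1 : ∫ x in cyl h, F x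
      = ∫ a in Set.Ioo (0:ℝ) 1, ∫ q in Set.Ioo (0:ℝ) 1 ×ˢ Set.Ioo (-h) 0, F (a, q) := by
    rw [show cyl h = Set.Ioo (0:ℝ) 1 ×ˢ (Set.Ioo (0:ℝ) 1 ×ˢ Set.Ioo (-h) 0) from rfl,
      Measure.volume_eq_prod]
    exact setIntegral_prod F (by rw [← Measure.volume_eq_prod]; exact integrableOn_cyl hF)
  rw [h1]
  exact integral_integral_swap (by
    rw [Measure.prod_restrict, ← Measure.volume_eq_prod]
    exact integrableOn_cyl hF)

lemma fub_y {h : ℝ} {F : ℝ×ℝ×ℝ → ℝ} (hF : Continuous F) :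
    ∫ x in cyl h, F x
      = ∫ a in Set.Ioo (0:ℝ) 1, ∫ z in Set.Ioo (-h) 0, ∫ b in Set.Ioo (0:ℝ) 1, F (a,b,z) := by
  have h1 : ∫ x in cyl h, F x
      = ∫ a in Set.Ioo (0:ℝ) 1, ∫ q in Set.Ioo (0:ℝ) 1 ×ˢ Set.Ioo (-h) 0, F (a, q) := by
    rw [show cyl h = Set.Ioo (0:ℝ) 1 ×ˢ (Set.Ioo (0:ℝ) 1 ×ˢ Set.Ioo (-h) 0) from rfl,
      Measure.volume_eq_prod]
    exact setIntegral_prod F (by rw [← Measure.volume_eq_prod]; exact integrableOn_cyl hF)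
  rw [h1]
  refine setIntegral_congr_fun measurableSet_Ioo (fun a _ => ?_)
  have h2 : ∫ q in Set.Ioo (0:ℝ) 1 ×ˢ Set.Ioo (-h) 0, F (a, q)
      = ∫ b in Set.Ioo (0:ℝ) 1, ∫ z in Set.Ioo (-h) 0, F (a, b, z) := by
    rw [Measure.volume_eq_prod]
    exact setIntegral_prod (fun q => F (a, q))
      (by rw [← Measure.volume_eq_prod]
          exact integrableOn_rect (hF.comp (by fun_prop)) 0 1 (-h) 0)
  rw [h2]
  exact integral_integral_swap (by
    rw [Measure.prod_restrict, ← Measure.volume_eq_prod]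
    exact integrableOn_rect (hF.comp (by fun_prop)) 0 1 (-h) 0)

lemma fub_sq {G : ℝ×ℝ → ℝ} (hG : Continuous G) :
    ∫ p in sqT, G p = ∫ a in Set.Ioo (0:ℝ) 1, ∫ b in Set.Ioo (0:ℝ) 1, G (a, b) := by
  rw [show sqT = Set.Ioo (0:ℝ) 1 ×ˢ Set.Ioo (0:ℝ) 1 from rfl, Measure.volume_eq_prod]
  exact setIntegral_prod G (by rw [← Measure.volume_eq_prod]; exact integrableOn_rect hG 0 1 0 1)

/-- Integration by parts in the first (periodic) direction. -/
lemma ibp0 {h : ℝ} {u v : ℝ×ℝ×ℝ → ℝ} (hu : ContDiff ℝ 1 u) (hv : ContDiff ℝ 1 v)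
    (hpu : Per3 u) (hpv : Per3 v) :
    ∫ x in cyl h, pd 0 u x * v x = - ∫ x in cyl h, u x * pd 0 v x := by
  have hdu : Differentiable ℝ u := hu.differentiable one_ne_zero
  have hdv : Differentiable ℝ v := hv.differentiable one_ne_zero
  have hcu := continuous_pd hu 0
  have hcv := continuous_pd hv 0
  have hcont : Continuous (fun x => pd 0 u x * v x + u x * pd 0 v x) :=
    ((hcu.mul hv.continuous).add (hu.continuous.mul hcv))
  have key : ∫ x in cyl h, (pd 0 u x * v x + u x * pd 0 v x) = 0 := by
    rw [fub_x hcont]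
    have inner : ∀ q : ℝ × ℝ,
        ∫ a in Set.Ioo (0:ℝ) 1, (pd 0 u (a, q) * v (a, q) + u (a, q) * pd 0 v (a, q)) = 0 := by
      intro q
      have hder : ∀ t : ℝ, HasDerivAt (fun t => u (t, q.1, q.2) * v (t, q.1, q.2))
          (pd 0 u (t, q.1, q.2) * v (t, q.1, q.2) + u (t, q.1, q.2) * pd 0 v (t, q.1, q.2)) t :=
        fun t => (slice0 hdu t q.1 q.2).mul (slice0 hdv t q.1 q.2)
      have hc1 : Continuous (fun t : ℝ =>
          pd 0 u (t, q.1, q.2) * v (t, q.1, q.2) + u (t, q.1, q.2) * pd 0 v (t, q.1, q.2)) := by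
        have hcc : Continuous (fun t : ℝ => ((t, q.1, q.2) : ℝ×ℝ×ℝ)) := by fun_prop
        exact ((hcu.comp hcc).mul (hv.continuous.comp hcc)).add
          ((hu.continuous.comp hcc).mul (hcv.comp hcc))
      have := integral_Ioo_deriv hder hc1 (by norm_num : (0:ℝ) ≤ 1)
      have hper0 : u (1, q.1, q.2) * v (1, q.1, q.2) = u (0, q.1, q.2) * v (0, q.1, q.2) := by
        have h1 := hpu.1 (0, q.1, q.2)
        have h2 := hpv.1 (0, q.1, q.2)
        simp only [zero_add] at h1 h2
        rw [h1, h2]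
      rw [hper0] at this
      simpa using this
    rw [show (fun q : ℝ × ℝ => ∫ a in Set.Ioo (0:ℝ) 1,
        (pd 0 u (a, q) * v (a, q) + u (a, q) * pd 0 v (a, q))) = fun _ => (0:ℝ) from
      funext fun q => inner q]
    simp
  have hsplit : ∫ x in cyl h, (pd 0 u x * v x + u x * pd 0 v x)
      = (∫ x in cyl h, pd 0 u x * v x) + ∫ x in cyl h, u x * pd 0 v x :=
    integral_add (integrableOn_cyl (hcu.mul hv.continuous))
      (integrableOn_cyl (hu.continuous.mul hcv))
  rw [hsplit] at key
  linarith

/-- Integration by parts in the second (periodic) direction. -/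
lemma ibp1 {h : ℝ} {u v : ℝ×ℝ×ℝ → ℝ} (hu : ContDiff ℝ 1 u) (hv : ContDiff ℝ 1 v)
    (hpu : Per3 u) (hpv : Per3 v) :
    ∫ x in cyl h, pd 1 u x * v x = - ∫ x in cyl h, u x * pd 1 v x := by
  have hdu : Differentiable ℝ u := hu.differentiable one_ne_zero
  have hdv : Differentiable ℝ v := hv.differentiable one_ne_zero
  have hcu := continuous_pd hu 1
  have hcv := continuous_pd hv 1
  have hcont : Continuous (fun x => pd 1 u x * v x + u x * pd 1 v x) :=
    ((hcu.mul hv.continuous).add (hu.continuous.mul hcv))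
  have key : ∫ x in cyl h, (pd 1 u x * v x + u x * pd 1 v x) = 0 := by
    rw [fub_y hcont]
    have inner : ∀ a z : ℝ,
        ∫ b in Set.Ioo (0:ℝ) 1,
          (pd 1 u (a, b, z) * v (a, b, z) + u (a, b, z) * pd 1 v (a, b, z)) = 0 := by
      intro a z
      have hder : ∀ t : ℝ, HasDerivAt (fun t => u (a, t, z) * v (a, t, z))
          (pd 1 u (a, t, z) * v (a, t, z) + u (a, t, z) * pd 1 v (a, t, z)) t :=
        fun t => (slice1 hdu a t z).mul (slice1 hdv a t z)
      have hc1 : Continuous (fun t : ℝ =>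
          pd 1 u (a, t, z) * v (a, t, z) + u (a, t, z) * pd 1 v (a, t, z)) := by
        have hcc : Continuous (fun t : ℝ => ((a, t, z) : ℝ×ℝ×ℝ)) := by fun_prop
        exact ((hcu.comp hcc).mul (hv.continuous.comp hcc)).add
          ((hu.continuous.comp hcc).mul (hcv.comp hcc))
      have := integral_Ioo_deriv hder hc1 (by norm_num : (0:ℝ) ≤ 1)
      have hper0 : u (a, 1, z) * v (a, 1, z) = u (a, 0, z) * v (a, 0, z) := by
        have h1 := hpu.2 (a, 0, z)
        have h2 := hpv.2 (a, 0, z)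
        simp only [zero_add] at h1 h2
        rw [h1, h2]
      rw [hper0] at this
      simpa using this
    have hz : ∀ a : ℝ, ∫ z in Set.Ioo (-h) 0, (∫ b in Set.Ioo (0:ℝ) 1,
        (pd 1 u (a, b, z) * v (a, b, z) + u (a, b, z) * pd 1 v (a, b, z))) = 0 := by
      intro a
      rw [show (fun z => ∫ b in Set.Ioo (0:ℝ) 1,
          (pd 1 u (a, b, z) * v (a, b, z) + u (a, b, z) * pd 1 v (a, b, z))) = fun _ => (0:ℝ) from
        funext fun z => inner a z]
      simp
    rw [show (fun a => ∫ z in Set.Ioo (-h) 0, ∫ b in Set.Ioo (0:ℝ) 1,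
        (pd 1 u (a, b, z) * v (a, b, z) + u (a, b, z) * pd 1 v (a, b, z))) = fun _ => (0:ℝ) from
      funext fun a => hz a]
    simp
  have hsplit : ∫ x in cyl h, (pd 1 u x * v x + u x * pd 1 v x)
      = (∫ x in cyl h, pd 1 u x * v x) + ∫ x in cyl h, u x * pd 1 v x :=
    integral_add (integrableOn_cyl (hcu.mul hv.continuous))
      (integrableOn_cyl (hu.continuous.mul hcv))
  rw [hsplit] at key
  linarith

/-- Integration by parts in the vertical direction. -/
lemma ibpz {h : ℝ} (hh : 0 < h) {u v : ℝ×ℝ×ℝ → ℝ} (hu : ContDiff ℝ 1 u) (hv : ContDiff ℝ 1 v) :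
    ∫ x in cyl h, pd 2 u x * v x
      = (∫ p in sqT, (u (p.1,p.2,0) * v (p.1,p.2,0) - u (p.1,p.2,-h) * v (p.1,p.2,-h)))
        - ∫ x in cyl h, u x * pd 2 v x := by
  have hdu : Differentiable ℝ u := hu.differentiable one_ne_zero
  have hdv : Differentiable ℝ v := hv.differentiable one_ne_zero
  have hcu := continuous_pd hu 2
  have hcv := continuous_pd hv 2
  have hcont : Continuous (fun x => pd 2 u x * v x + u x * pd 2 v x) :=
    ((hcu.mul hv.continuous).add (hu.continuous.mul hcv))
  have key : ∫ x in cyl h, (pd 2 u x * v x + u x * pd 2 v x)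
      = ∫ p in sqT, (u (p.1,p.2,0) * v (p.1,p.2,0) - u (p.1,p.2,-h) * v (p.1,p.2,-h)) := by
    rw [fub_cyl hcont]
    have hGc : Continuous (fun p : ℝ×ℝ =>
        u (p.1,p.2,0) * v (p.1,p.2,0) - u (p.1,p.2,-h) * v (p.1,p.2,-h)) := by fun_prop
    rw [fub_sq hGc]
    refine setIntegral_congr_fun measurableSet_Ioo (fun a _ => ?_)
    refine setIntegral_congr_fun measurableSet_Ioo (fun b _ => ?_)
    have hder : ∀ t : ℝ, HasDerivAt (fun t => u (a, b, t) * v (a, b, t))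
        (pd 2 u (a, b, t) * v (a, b, t) + u (a, b, t) * pd 2 v (a, b, t)) t :=
      fun t => (slice2 hdu a b t).mul (slice2 hdv a b t)
    have hc1 : Continuous (fun t : ℝ =>
        pd 2 u (a, b, t) * v (a, b, t) + u (a, b, t) * pd 2 v (a, b, t)) := by
      have hcc : Continuous (fun t : ℝ => ((a, b, t) : ℝ×ℝ×ℝ)) := by fun_prop
      exact ((hcu.comp hcc).mul (hv.continuous.comp hcc)).add
        ((hu.continuous.comp hcc).mul (hcv.comp hcc))
    exact integral_Ioo_deriv hder hc1 (by linarith : (-h:ℝ) ≤ 0)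
  have hsplit : ∫ x in cyl h, (pd 2 u x * v x + u x * pd 2 v x)
      = (∫ x in cyl h, pd 2 u x * v x) + ∫ x in cyl h, u x * pd 2 v x :=
    integral_add (integrableOn_cyl (hcu.mul hv.continuous))
      (integrableOn_cyl (hu.continuous.mul hcv))
  rw [hsplit] at key
  linarith

set_option maxHeartbeats 1000000 in
/-- Kadlec's formula on the cylinder `O = 𝕋² × (−h,0)`: for a `C³` function with
Neumann condition at the bottom and Robin condition `∂₃f + βf = 0` at the top,
the `L²` norm of the Hessian equals the `L²` norm of the Laplacian minus
`2β ∫_{𝕋²} |∇_H f(·,0)|²`. -/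
theorem statement4 (h β : ℝ) (hh : 0 < h) (f : ℝ × ℝ × ℝ → ℝ)
    (hf : ContDiff ℝ 3 f) (hper : Per3 f)
    (hbot : ∀ a b : ℝ, pd 2 f (a, b, -h) = 0)
    (htop : ∀ a b : ℝ, pd 2 f (a, b, 0) + β * f (a, b, 0) = 0) :
    (∑ i : Fin 3, ∑ j : Fin 3, ∫ x in cyl h, (pd2 i j f x) ^ 2)
      = (∫ x in cyl h, (∑ i : Fin 3, pd2 i i f x) ^ 2)
        - 2 * β * ∫ p in sqT, ((pd 0 f (p.1, p.2, 0)) ^ 2 + (pd 1 f (p.1, p.2, 0)) ^ 2) := by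
  -- regularity facts
  have hf2 : ContDiff ℝ 2 f := hf.of_le (by norm_num)
  have hf1 : ContDiff ℝ 1 f := hf.of_le (by norm_num)
  have hdf : Differentiable ℝ f := hf.differentiable (by norm_num)
  have hC2 : ∀ i : Fin 3, ContDiff ℝ 2 (pd i f) := fun i =>
    pd_contDiff (show ContDiff ℝ ((2:WithTop ℕ∞)+1) f by norm_num; exact hf) i
  have hC1 : ∀ i : Fin 3, ContDiff ℝ 1 (pd i f) := fun i => (hC2 i).of_le (by norm_num)
  have hD1 : ∀ i : Fin 3, Differentiable ℝ (pd i f) := fun i => (hC1 i).differentiable one_ne_zero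
  have hC1ij : ∀ i j : Fin 3, ContDiff ℝ 1 (pd i (pd j f)) := fun i j =>
    pd_contDiff (show ContDiff ℝ ((1:WithTop ℕ∞)+1) (pd j f) by norm_num; exact hC2 j) i
  have hperi : ∀ i : Fin 3, Per3 (pd i f) := fun i => per_pd hdf hper i
  have hperij : ∀ i j : Fin 3, Per3 (pd i (pd j f)) := fun i j => per_pd (hD1 j) (hperi j) i
  -- symmetry of second derivatives
  have comm_f : ∀ (i j : Fin 3) x, pd i (pd j f) x = pd j (pd i f) x :=
    fun i j x => pd_comm hf2 i j x
  have comm_pd : ∀ (k i j : Fin 3) x, pd i (pd j (pd k f)) x = pd j (pd i (pd k f)) x :=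
    fun k i j x => pd_comm (hC2 k) i j x
  have hs10 : pd 1 (pd 0 f) = pd 0 (pd 1 f) := funext fun x => comm_f 1 0 x
  have hs20 : pd 2 (pd 0 f) = pd 0 (pd 2 f) := funext fun x => comm_f 2 0 x
  have hs21 : pd 2 (pd 1 f) = pd 1 (pd 2 f) := funext fun x => comm_f 2 1 x
  -- boundary values of the mixed derivatives
  have hd2f : Differentiable ℝ (pd 2 f) := (hC2 2).differentiable (by norm_num)
  have rob0 : ∀ a b : ℝ, pd 0 (pd 2 f) (a,b,0) = -β * pd 0 f (a,b,0) := by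
    intro a b
    have h1 : HasDerivAt (fun t => pd 2 f (t,b,0)) (pd 0 (pd 2 f) (a,b,0)) a := slice0 hd2f a b 0
    have h2 : HasDerivAt (fun t => -β * f (t,b,0)) (-β * pd 0 f (a,b,0)) a :=
      HasDerivAt.const_mul (-β) (slice0 hdf a b 0)
    have heq : (fun t => pd 2 f (t,b,0)) = fun t => -β * f (t,b,0) := funext fun t => by
      have := htop t b; linarith
    rw [heq] at h1
    exact h1.unique h2
  have rob1 : ∀ a b : ℝ, pd 1 (pd 2 f) (a,b,0) = -β * pd 1 f (a,b,0) := by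
    intro a b
    have h1 : HasDerivAt (fun t => pd 2 f (a,t,0)) (pd 1 (pd 2 f) (a,b,0)) b := slice1 hd2f a b 0
    have h2 : HasDerivAt (fun t => -β * f (a,t,0)) (-β * pd 1 f (a,b,0)) b :=
      HasDerivAt.const_mul (-β) (slice1 hdf a b 0)
    have heq : (fun t => pd 2 f (a,t,0)) = fun t => -β * f (a,t,0) := funext fun t => by
      have := htop a t; linarith
    rw [heq] at h1
    exact h1.unique h2
  have neu0 : ∀ a b : ℝ, pd 0 (pd 2 f) (a,b,-h) = 0 := by
    intro a b
    have h1 : HasDerivAt (fun t => pd 2 f (t,b,-h)) (pd 0 (pd 2 f) (a,b,-h)) a :=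
      slice0 hd2f a b (-h)
    have heq : (fun t => pd 2 f (t,b,-h)) = fun _ => (0:ℝ) := funext fun t => hbot t b
    rw [heq] at h1
    exact h1.unique (hasDerivAt_const a 0)
  have neu1 : ∀ a b : ℝ, pd 1 (pd 2 f) (a,b,-h) = 0 := by
    intro a b
    have h1 : HasDerivAt (fun t => pd 2 f (a,t,-h)) (pd 1 (pd 2 f) (a,b,-h)) b :=
      slice1 hd2f a b (-h)
    have heq : (fun t => pd 2 f (a,t,-h)) = fun _ => (0:ℝ) := funext fun t => hbot a t
    rw [heq] at h1
    exact h1.unique (hasDerivAt_const b 0)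
  -- the three key integration-by-parts identities
  have K01 : ∫ x in cyl h, pd 0 (pd 1 f) x * pd 0 (pd 1 f) x
      = ∫ x in cyl h, pd 0 (pd 0 f) x * pd 1 (pd 1 f) x := by
    rw [ibp0 (hC1 1) (hC1ij 0 1) (hperi 1) (hperij 0 1)]
    have e2 : pd 0 (pd 0 (pd 1 f)) = pd 1 (pd 0 (pd 0 f)) := by
      rw [hs10.symm]
      exact funext fun x => comm_pd 0 0 1 x
    rw [e2]
    have e4 := ibp1 (h := h) (u := pd 0 (pd 0 f)) (v := pd 1 f)
      (hC1ij 0 0) (hC1 1) (hperij 0 0) (hperi 1)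
    rw [show (fun x => pd 1 f x * pd 1 (pd 0 (pd 0 f)) x)
        = fun x => pd 1 (pd 0 (pd 0 f)) x * pd 1 f x from funext fun x => mul_comm _ _]
    rw [e4]
    simp
  have K02 : ∫ x in cyl h, pd 0 (pd 2 f) x * pd 0 (pd 2 f) x
      = (∫ x in cyl h, pd 0 (pd 0 f) x * pd 2 (pd 2 f) x)
        - β * ∫ p in sqT, pd 0 f (p.1,p.2,0) * pd 0 f (p.1,p.2,0) := by
    rw [← hs20, ibpz hh (hC1 0) (hC1ij 2 0)]
    have hbdry : ∫ p in sqT, (pd 0 f (p.1,p.2,0) * pd 2 (pd 0 f) (p.1,p.2,0)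
        - pd 0 f (p.1,p.2,-h) * pd 2 (pd 0 f) (p.1,p.2,-h))
        = -β * ∫ p in sqT, pd 0 f (p.1,p.2,0) * pd 0 f (p.1,p.2,0) := by
      rw [← integral_const_mul]
      refine setIntegral_congr_fun
        ((measurableSet_Ioo.prod measurableSet_Ioo : MeasurableSet sqT)) (fun p _ => ?_)
      rw [hs20, rob0 p.1 p.2, neu0 p.1 p.2]
      ring
    have e2 : pd 2 (pd 2 (pd 0 f)) = pd 0 (pd 2 (pd 2 f)) := by
      rw [hs20]
      exact funext fun x => comm_pd 2 2 0 x
    have hvol : ∫ x in cyl h, pd 0 f x * pd 2 (pd 2 (pd 0 f)) x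
        = - ∫ x in cyl h, pd 0 (pd 0 f) x * pd 2 (pd 2 f) x := by
      rw [e2]
      have e4 := ibp0 (h := h) (u := pd 2 (pd 2 f)) (v := pd 0 f)
        (hC1ij 2 2) (hC1 0) (hperij 2 2) (hperi 0)
      rw [show (fun x => pd 0 f x * pd 0 (pd 2 (pd 2 f)) x)
          = fun x => pd 0 (pd 2 (pd 2 f)) x * pd 0 f x from funext fun x => mul_comm _ _]
      rw [e4]
      rw [show (fun x => pd 2 (pd 2 f) x * pd 0 (pd 0 f) x)
          = fun x => pd 0 (pd 0 f) x * pd 2 (pd 2 f) x from funext fun x => mul_comm _ _]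
    rw [hbdry, hvol]
    ring
  have K12 : ∫ x in cyl h, pd 1 (pd 2 f) x * pd 1 (pd 2 f) x
      = (∫ x in cyl h, pd 1 (pd 1 f) x * pd 2 (pd 2 f) x)
        - β * ∫ p in sqT, pd 1 f (p.1,p.2,0) * pd 1 f (p.1,p.2,0) := by
    rw [← hs21, ibpz hh (hC1 1) (hC1ij 2 1)]
    have hbdry : ∫ p in sqT, (pd 1 f (p.1,p.2,0) * pd 2 (pd 1 f) (p.1,p.2,0)
        - pd 1 f (p.1,p.2,-h) * pd 2 (pd 1 f) (p.1,p.2,-h))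
        = -β * ∫ p in sqT, pd 1 f (p.1,p.2,0) * pd 1 f (p.1,p.2,0) := by
      rw [← integral_const_mul]
      refine setIntegral_congr_fun
        ((measurableSet_Ioo.prod measurableSet_Ioo : MeasurableSet sqT)) (fun p _ => ?_)
      rw [hs21, rob1 p.1 p.2, neu1 p.1 p.2]
      ring
    have e2 : pd 2 (pd 2 (pd 1 f)) = pd 1 (pd 2 (pd 2 f)) := by
      rw [hs21]
      exact funext fun x => comm_pd 2 2 1 x
    have hvol : ∫ x in cyl h, pd 1 f x * pd 2 (pd 2 (pd 1 f)) x
        = - ∫ x in cyl h, pd 1 (pd 1 f) x * pd 2 (pd 2 f) x := by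
      rw [e2]
      have e4 := ibp1 (h := h) (u := pd 2 (pd 2 f)) (v := pd 1 f)
        (hC1ij 2 2) (hC1 1) (hperij 2 2) (hperi 1)
      rw [show (fun x => pd 1 f x * pd 1 (pd 2 (pd 2 f)) x)
          = fun x => pd 1 (pd 2 (pd 2 f)) x * pd 1 f x from funext fun x => mul_comm _ _]
      rw [e4]
      rw [show (fun x => pd 2 (pd 2 f) x * pd 1 (pd 1 f) x)
          = fun x => pd 1 (pd 1 f) x * pd 2 (pd 2 f) x from funext fun x => mul_comm _ _]
    rw [hbdry, hvol]
    ring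
  -- continuity facts for splitting integrals
  have ctsij : ∀ i j : Fin 3, Continuous (pd i (pd j f)) := fun i j => (hC1ij i j).continuous
  -- expansion of the squared Laplacian
  have hexp : ∫ x in cyl h, (pd 0 (pd 0 f) x + pd 1 (pd 1 f) x + pd 2 (pd 2 f) x)
        * (pd 0 (pd 0 f) x + pd 1 (pd 1 f) x + pd 2 (pd 2 f) x)
      = (∫ x in cyl h, pd 0 (pd 0 f) x * pd 0 (pd 0 f) x)
        + (∫ x in cyl h, pd 1 (pd 1 f) x * pd 1 (pd 1 f) x)
        + (∫ x in cyl h, pd 2 (pd 2 f) x * pd 2 (pd 2 f) x)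
        + 2 * (∫ x in cyl h, pd 0 (pd 0 f) x * pd 1 (pd 1 f) x)
        + 2 * (∫ x in cyl h, pd 0 (pd 0 f) x * pd 2 (pd 2 f) x)
        + 2 * (∫ x in cyl h, pd 1 (pd 1 f) x * pd 2 (pd 2 f) x) := by
    have c00 := ctsij 0 0
    have c11 := ctsij 1 1
    have c22 := ctsij 2 2
    have e0 : ∫ x in cyl h, (pd 0 (pd 0 f) x + pd 1 (pd 1 f) x + pd 2 (pd 2 f) x)
        * (pd 0 (pd 0 f) x + pd 1 (pd 1 f) x + pd 2 (pd 2 f) x)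
        = ∫ x in cyl h, (pd 0 (pd 0 f) x * pd 0 (pd 0 f) x
          + (pd 1 (pd 1 f) x * pd 1 (pd 1 f) x
          + (pd 2 (pd 2 f) x * pd 2 (pd 2 f) x
          + (2 * (pd 0 (pd 0 f) x * pd 1 (pd 1 f) x)
          + (2 * (pd 0 (pd 0 f) x * pd 2 (pd 2 f) x)
          + 2 * (pd 1 (pd 1 f) x * pd 2 (pd 2 f) x)))))) := by
      refine integral_congr_ae (Filter.Eventually.of_forall fun x => ?_)
      ring
    rw [e0]
    have c1 : Continuous fun x => pd 0 (pd 0 f) x * pd 0 (pd 0 f) x := c00.mul c00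
    have c2 : Continuous fun x => pd 1 (pd 1 f) x * pd 1 (pd 1 f) x := c11.mul c11
    have c3 : Continuous fun x => pd 2 (pd 2 f) x * pd 2 (pd 2 f) x := c22.mul c22
    have c4 : Continuous fun x => 2 * (pd 0 (pd 0 f) x * pd 1 (pd 1 f) x) :=
      continuous_const.mul (c00.mul c11)
    have c5 : Continuous fun x => 2 * (pd 0 (pd 0 f) x * pd 2 (pd 2 f) x) :=
      continuous_const.mul (c00.mul c22)
    have c6 : Continuous fun x => 2 * (pd 1 (pd 1 f) x * pd 2 (pd 2 f) x) :=
      continuous_const.mul (c11.mul c22)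
    have c56 : Continuous fun x => 2 * (pd 0 (pd 0 f) x * pd 2 (pd 2 f) x) + 2 * (pd 1 (pd 1 f) x * pd 2 (pd 2 f) x) := c5.add c6
    have c456 : Continuous fun x => 2 * (pd 0 (pd 0 f) x * pd 1 (pd 1 f) x) + (2 * (pd 0 (pd 0 f) x * pd 2 (pd 2 f) x) + 2 * (pd 1 (pd 1 f) x * pd 2 (pd 2 f) x)) := c4.add c56
    have c3456 : Continuous fun x => pd 2 (pd 2 f) x * pd 2 (pd 2 f) x + (2 * (pd 0 (pd 0 f) x * pd 1 (pd 1 f) x) + (2 * (pd 0 (pd 0 f) x * pd 2 (pd 2 f) x) + 2 * (pd 1 (pd 1 f) x * pd 2 (pd 2 f) x))) := c3.add c456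
    have c23456 : Continuous fun x => pd 1 (pd 1 f) x * pd 1 (pd 1 f) x + (pd 2 (pd 2 f) x * pd 2 (pd 2 f) x + (2 * (pd 0 (pd 0 f) x * pd 1 (pd 1 f) x) + (2 * (pd 0 (pd 0 f) x * pd 2 (pd 2 f) x) + 2 * (pd 1 (pd 1 f) x * pd 2 (pd 2 f) x)))) := c2.add c3456
    rw [integral_add (integrableOn_cyl c1)
      (integrableOn_cyl c23456),
      integral_add (integrableOn_cyl c2)
      (integrableOn_cyl c3456),
      integral_add (integrableOn_cyl c3) (integrableOn_cyl c456),
      integral_add (integrableOn_cyl c4) (integrableOn_cyl c56),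
      integral_add (integrableOn_cyl c5) (integrableOn_cyl c6),
      integral_const_mul, integral_const_mul, integral_const_mul]
    ring
  -- splitting the boundary integral
  have cp0 : Continuous (fun p : ℝ×ℝ => pd 0 f (p.1, p.2, 0)) :=
    (continuous_pd hf1 0).comp (by fun_prop)
  have cp1 : Continuous (fun p : ℝ×ℝ => pd 1 f (p.1, p.2, 0)) :=
    (continuous_pd hf1 1).comp (by fun_prop)
  have bsplit : ∫ p in sqT, (pd 0 f (p.1,p.2,0) * pd 0 f (p.1,p.2,0)
        + pd 1 f (p.1,p.2,0) * pd 1 f (p.1,p.2,0))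
      = (∫ p in sqT, pd 0 f (p.1,p.2,0) * pd 0 f (p.1,p.2,0))
        + ∫ p in sqT, pd 1 f (p.1,p.2,0) * pd 1 f (p.1,p.2,0) := by
    refine integral_add ?_ ?_
    · exact integrableOn_rect (cp0.mul cp0) 0 1 0 1
    · exact integrableOn_rect (cp1.mul cp1) 0 1 0 1
  -- final assembly
  simp only [pd2, Fin.sum_univ_three, pow_two]
  rw [hs10, hs20, hs21]
  linear_combination 2*K01 + 2*K02 + 2*K12 - hexp + 2*β*bsplit
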